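/- Let w ≥ 1 be an integer, let n_{−w}, …, n_w be positive reals, and let g_{−w}, …, g_w be reals. Set n_w^{tot} = Σ_{i=−w}^{w} n_i, μ_n = n_w^{tot}/(2w+1), and σ_n = √(Σ_{i=−w}^{w} (n_i − μ_n)²/(2w+1)). Then for every c ∈ ℝ: |(1/n_w^{tot})·Σ_{i=−w}^{w} n_i·g_i − (1/(2w+1))·Σ_{i=−w}^{w} g_i| ≤ (σ_n/μ_n)·√((1/(2w+1))·Σ_{i=−w}^{w} (g_i − c)²) ≤ (σ_n/μ_n)·max_{−w ≤ i ≤ w} |g_i − c|. -/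

import Mathlib

/-- Cauchy–Schwarz step in the proof of the paper's Lemma 8: the count-weighted
average differs from the unweighted average by at most `(σ_n/μ_n)` times the
root-mean-square (hence the maximum) deviation of the values from any `c`. -/
theorem weighted_vs_unweighted_average (w : ℕ) (hw : 1 ≤ w)
    (n g : ℤ → ℝ) (hn : ∀ i ∈ Finset.Icc (-(w : ℤ)) (w : ℤ), 0 < n i)
    (ntot μn σn : ℝ)
    (hntot : ntot = ∑ i ∈ Finset.Icc (-(w : ℤ)) (w : ℤ), n i)
    (hμn : μn = ntot / (2 * w + 1))
    (hσn : σn = Real.sqrt ((∑ i ∈ Finset.Icc (-(w : ℤ)) (w : ℤ), (n i - μn) ^ 2) / (2 * w + 1))) :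
    ∀ c : ℝ,
      |(1 / ntot) * ∑ i ∈ Finset.Icc (-(w : ℤ)) (w : ℤ), n i * g i
          - (1 / (2 * (w : ℝ) + 1)) * ∑ i ∈ Finset.Icc (-(w : ℤ)) (w : ℤ), g i|
        ≤ (σn / μn) *
            Real.sqrt ((1 / (2 * (w : ℝ) + 1)) *
              ∑ i ∈ Finset.Icc (-(w : ℤ)) (w : ℤ), (g i - c) ^ 2) ∧
      (σn / μn) *
          Real.sqrt ((1 / (2 * (w : ℝ) + 1)) *
            ∑ i ∈ Finset.Icc (-(w : ℤ)) (w : ℤ), (g i - c) ^ 2)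
        ≤ (σn / μn) *
            (Finset.Icc (-(w : ℤ)) (w : ℤ)).sup'
              (Finset.nonempty_Icc.mpr (by omega)) (fun i => |g i - c|) := by
  intro c
  set S : Finset ℤ := Finset.Icc (-(w : ℤ)) (w : ℤ) with hS
  have hne : S.Nonempty := Finset.nonempty_Icc.mpr (by omega)
  have hN : (0:ℝ) < 2 * (w : ℝ) + 1 := by positivity
  set A : ℝ := ∑ i ∈ S, (n i - μn) ^ 2 with hA
  set B : ℝ := ∑ i ∈ S, (g i - c) ^ 2 with hB
  have hA0 : 0 ≤ A := Finset.sum_nonneg fun i _ => sq_nonneg _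
  have hB0 : 0 ≤ B := Finset.sum_nonneg fun i _ => sq_nonneg _
  have hcard : (S.card : ℝ) = 2 * (w : ℝ) + 1 := by
    rw [hS, Int.card_Icc]
    have : ((w : ℤ) + 1 - -(w : ℤ)).toNat = 2 * w + 1 := by omega
    rw [this]; push_cast; ring
  have hntot_pos : 0 < ntot := by
    rw [hntot]; exact Finset.sum_pos hn hne
  have hμ_pos : 0 < μn := by rw [hμn]; positivity
  have hntotμ : ntot = μn * (2 * (w : ℝ) + 1) := by
    rw [hμn]; field_simp
  -- key identity
  have expand : ∑ i ∈ S, (n i - μn) * (g i - c)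
      = ∑ i ∈ S, n i * g i - c * ∑ i ∈ S, n i - μn * ∑ i ∈ S, g i
        + (2 * (w : ℝ) + 1) * (μn * c) := by
    rw [← hcard, Finset.mul_sum, Finset.mul_sum, ← Finset.sum_sub_distrib,
      ← Finset.sum_sub_distrib, Finset.card_eq_sum_ones S]
    push_cast
    rw [Finset.sum_mul, ← Finset.sum_add_distrib]
    exact Finset.sum_congr rfl fun i _ => by ring
  have key : (1 / ntot) * ∑ i ∈ S, n i * g i - (1 / (2 * (w : ℝ) + 1)) * ∑ i ∈ S, g i
      = (∑ i ∈ S, (n i - μn) * (g i - c)) / ntot := by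
    rw [expand, ← hntot, hntotμ]
    field_simp
    ring
  -- Cauchy–Schwarz
  have cs : (∑ i ∈ S, (n i - μn) * (g i - c)) ^ 2 ≤ A * B :=
    Finset.sum_mul_sq_le_sq_mul_sq S _ _
  have habs : |∑ i ∈ S, (n i - μn) * (g i - c)| ≤ Real.sqrt A * Real.sqrt B := by
    rw [← Real.sqrt_mul hA0]
    have : |∑ i ∈ S, (n i - μn) * (g i - c)|
        = Real.sqrt ((∑ i ∈ S, (n i - μn) * (g i - c)) ^ 2) := by
      rw [Real.sqrt_sq_eq_abs]
    rw [this]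
    exact Real.sqrt_le_sqrt cs
  have hsN : Real.sqrt (2 * (w : ℝ) + 1) > 0 := Real.sqrt_pos.mpr hN
  have hσA : σn = Real.sqrt A / Real.sqrt (2 * (w : ℝ) + 1) := by
    rw [hσn, ← Real.sqrt_div hA0]
  have hsqB : Real.sqrt ((1 / (2 * (w : ℝ) + 1)) * B)
      = Real.sqrt B / Real.sqrt (2 * (w : ℝ) + 1) := by
    rw [one_div, inv_mul_eq_div, Real.sqrt_div hB0]
  constructor
  · rw [key, abs_div, abs_of_pos hntot_pos, div_le_iff₀ hntot_pos]
    have hrhs : (σn / μn) * Real.sqrt ((1 / (2 * (w : ℝ) + 1)) * B) * ntot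
        = Real.sqrt A * Real.sqrt B := by
      rw [hσA, hsqB, hntotμ]
      field_simp
      linear_combination (-(Real.sqrt A * Real.sqrt B)) * Real.sq_sqrt hN.le
    rw [hrhs]
    exact habs
  · set M : ℝ := S.sup' hne (fun i => |g i - c|) with hM
    have hM0 : 0 ≤ M := by
      obtain ⟨i, hi⟩ := hne
      exact le_trans (abs_nonneg (g i - c)) (Finset.le_sup' (fun i => |g i - c|) hi)
    have hσμ : 0 ≤ σn / μn := div_nonneg (by rw [hσn]; positivity) hμ_pos.le
    refine mul_le_mul_of_nonneg_left ?_ hσμ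
    have hBle : B ≤ (2 * (w : ℝ) + 1) * M ^ 2 := by
      rw [← hcard]
      calc B ≤ ∑ _i ∈ S, M ^ 2 := by
              refine Finset.sum_le_sum fun i hi => ?_
              have := Finset.le_sup' (fun i => |g i - c|) hi
              calc (g i - c) ^ 2 = |g i - c| ^ 2 := (sq_abs _).symm
                _ ≤ M ^ 2 := pow_le_pow_left₀ (abs_nonneg _) this 2
        _ = (S.card : ℝ) * M ^ 2 := by rw [Finset.sum_const, nsmul_eq_mul]
    calc Real.sqrt ((1 / (2 * (w : ℝ) + 1)) * B)
        ≤ Real.sqrt (M ^ 2) := by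
          apply Real.sqrt_le_sqrt
          rw [one_div, inv_mul_le_iff₀ hN]
          linarith [hBle]
      _ = M := Real.sqrt_sq hM0
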